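/- Let a_k(t) ≥ 0 be measurable essentially bounded functions and h_k(t) ≤ t measurable delays with limsup_{t→∞}(t - h_k(t)) < ∞. If the delay equation x'(t) + Σ_{k=1}^m a_k(t) x(h_k(t)) = 0 is asymptotically stable, then ∫_0^∞ Σ_{k=1}^m a_k(s) ds = ∞, and consequently the ordinary differential equation x'(t) + (Σ_{k=1}^m a_k(t)) x(t) = 0 is asymptotically stable. -/

import Mathlib

set_option maxHeartbeats 1000000

open MeasureTheory Real Finset Filter

/-- Theorem 5 (first part): for nonnegative coefficients and bounded delays,
asymptotic stability of the delay equation (in particular, its fundamental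
function tends to 0) implies ∫_0^∞ Σ_k a_k = ∞ and hence asymptotic stability
of the ODE x' + (Σ_k a_k) x = 0, whose solutions are x₀ exp(-∫_{t₀}^t Σ_k a_k). -/
theorem stmt7 (m : ℕ) (a : Fin m → ℝ → ℝ) (h : Fin m → ℝ → ℝ) (X : ℝ → ℝ → ℝ)
    (hameas : ∀ k, Measurable (a k)) (habd : ∃ A : ℝ, ∀ k t, |a k t| ≤ A)
    (hapos : ∀ k t, 0 ≤ a k t)
    (hh : ∀ k, Measurable (h k)) (hht : ∀ k t, h k t ≤ t)
    (hdel : ∃ C : ℝ, ∀ k t, t - h k t ≤ C)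
    (hX0 : ∀ s t : ℝ, 0 ≤ s → t < s → X t s = 0)
    (hX1 : ∀ s : ℝ, 0 ≤ s → X s s = 1)
    (hXeq : ∀ s t : ℝ, 0 ≤ s → s ≤ t →
      X t s = 1 - ∫ τ in s..t, ∑ k : Fin m, a k τ * X (h k τ) s)
    (hstab : ∀ t₀ : ℝ, 0 ≤ t₀ →
      Filter.Tendsto (fun t => X t t₀) Filter.atTop (nhds 0)) :
    ¬ IntegrableOn (fun s => ∑ k : Fin m, a k s) (Set.Ici (0:ℝ)) ∧
      (∀ t₀ : ℝ, 0 ≤ t₀ → ∀ x₀ : ℝ,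
        Filter.Tendsto (fun t => x₀ * Real.exp (-∫ s in t₀..t, ∑ k : Fin m, a k s))
          Filter.atTop (nhds 0)) := by
  classical
  obtain ⟨A, hA⟩ := habd
  set F : ℝ → ℝ := fun s => ∑ k : Fin m, a k s with hFdef
  have hFmeas : Measurable F := Finset.measurable_sum _ fun k _ => hameas k
  have hFpos : ∀ s, 0 ≤ F s := fun s => Finset.sum_nonneg fun k _ => hapos k s
  have hFbd : ∀ s, ‖F s‖ ≤ (m : ℝ) * A := by
    intro s
    rw [Real.norm_eq_abs]
    calc |F s| ≤ ∑ k : Fin m, |a k s| := Finset.abs_sum_le_sum_abs _ _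
      _ ≤ ∑ _k : Fin m, A := Finset.sum_le_sum fun k _ => hA k s
      _ = (m : ℝ) * A := by simp [mul_comm]
  have hFloc : ∀ s : Set ℝ, volume s < ⊤ → IntegrableOn F s := by
    intro s hvol
    exact Integrable.mono' (integrableOn_const hvol.ne)
      hFmeas.aestronglyMeasurable (Filter.Eventually.of_forall fun x => hFbd x)
  have hFint : ∀ p q : ℝ, IntervalIntegrable F volume p q := by
    intro p q
    apply IntegrableOn.intervalIntegrable
    rw [Set.uIcc_eq_union]
    exact (hFloc _ measure_Icc_lt_top).union (hFloc _ measure_Icc_lt_top)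
  -- First part: non-integrability
  have hni : ¬ IntegrableOn F (Set.Ici (0:ℝ)) := by
    intro hInt
    have hIoi : IntegrableOn F (Set.Ioi (0:ℝ)) := hInt.mono_set Set.Ioi_subset_Ici_self
    have hconv : Tendsto (fun t => ∫ s in (0:ℝ)..t, F s) atTop
        (nhds (∫ s in Set.Ioi (0:ℝ), F s)) :=
      intervalIntegral_tendsto_integral_Ioi 0 hIoi tendsto_id
    obtain ⟨N, hN⟩ := (Metric.tendsto_atTop.1 hconv) (1/8) (by norm_num)
    set t₀ : ℝ := max N 0 with ht₀def
    have ht₀ : (0:ℝ) ≤ t₀ := le_max_right _ _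
    have htail : ∀ t, t₀ ≤ t → ∫ s in t₀..t, F s ≤ 1/4 := by
      intro t ht
      have h1 := hN t₀ (le_max_left _ _)
      have h2 := hN t (le_trans (le_max_left _ _) ht)
      have hsplit : ∫ s in t₀..t, F s
          = (∫ s in (0:ℝ)..t, F s) - ∫ s in (0:ℝ)..t₀, F s :=
        (intervalIntegral.integral_interval_sub_left (hFint 0 t) (hFint 0 t₀)).symm
      rw [Real.dist_eq] at h1 h2
      rw [hsplit]
      linarith [(abs_lt.1 h1).1, (abs_lt.1 h1).2, (abs_lt.1 h2).1, (abs_lt.1 h2).2]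
    set f : ℝ → ℝ := fun t => X t t₀ with hfdef
    set G : ℝ → ℝ := fun τ => ∑ k : Fin m, a k τ * X (h k τ) t₀ with hGdef
    have hfeq : ∀ t, t₀ ≤ t → f t = 1 - ∫ τ in t₀..t, G τ := fun t ht =>
      hXeq t₀ t ht₀ ht
    -- pointwise bound on G from a bound on f
    have hGbd : ∀ (M : ℝ) (t : ℝ), (∀ u, t₀ ≤ u → u ≤ t → |f u| ≤ M) →
        ∀ τ, t₀ ≤ τ → τ ≤ t → ‖G τ‖ ≤ M * F τ := by
      intro M t hM τ hτ1 hτ2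
      have hM0 : 0 ≤ M := le_trans (abs_nonneg _) (hM t₀ le_rfl (le_trans hτ1 hτ2))
      rw [Real.norm_eq_abs]
      calc |G τ| ≤ ∑ k : Fin m, |a k τ * X (h k τ) t₀| := Finset.abs_sum_le_sum_abs _ _
        _ ≤ ∑ k : Fin m, a k τ * M := by
            apply Finset.sum_le_sum
            intro k _
            rw [abs_mul, abs_of_nonneg (hapos k τ)]
            apply mul_le_mul_of_nonneg_left _ (hapos k τ)
            by_cases hcase : h k τ < t₀
            · rw [hX0 t₀ _ ht₀ hcase, abs_zero]; exact hM0
            · push_neg at hcase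
              exact hM _ hcase (le_trans (hht k τ) hτ2)
        _ = M * F τ := by rw [← Finset.sum_mul, mul_comm]
    -- boundedness of f on [t₀, ∞)
    have hfbd : ∀ t, t₀ ≤ t → |f t| ≤ 3/2 := by
      by_contra hcon
      push_neg at hcon
      obtain ⟨t1, ht1, hft1⟩ := hcon
      have hGi : IntervalIntegrable G volume t₀ t1 := by
        by_contra hni'
        rw [hfeq t1 ht1, intervalIntegral.integral_undef hni'] at hft1
        norm_num at hft1
      have hcontf : ContinuousOn f (Set.Icc t₀ t1) := by
        have hGIcc : IntegrableOn G (Set.uIcc t₀ t1) := by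
          rw [Set.uIcc_of_le ht1]
          exact (intervalIntegrable_iff_integrableOn_Icc_of_le ht1).1 hGi
        have h1 : ContinuousOn (fun t => 1 - ∫ τ in t₀..t, G τ) (Set.Icc t₀ t1) := by
          have := intervalIntegral.continuousOn_primitive_interval hGIcc
          rw [Set.uIcc_of_le ht1] at this
          exact continuousOn_const.sub this
        exact h1.congr fun t ht => hfeq t ht.1
      obtain ⟨t₂, ht₂mem, ht₂max⟩ := isCompact_Icc.exists_isMaxOn
        (Set.nonempty_Icc.2 ht1) (continuous_abs.comp_continuousOn hcontf)
      set M : ℝ := |f t₂| with hMdef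
      have hMgt : 3/2 < M := lt_of_lt_of_le hft1 (ht₂max ⟨ht1, le_rfl⟩)
      have hbound : ∀ u, t₀ ≤ u → u ≤ t1 → |f u| ≤ M := fun u h1 h2 => ht₂max ⟨h1, h2⟩
      have ht₂l : t₀ ≤ t₂ := ht₂mem.1
      have hGi2 : IntervalIntegrable G volume t₀ t₂ := by
        apply hGi.mono_set
        rw [Set.uIcc_of_le ht₂l, Set.uIcc_of_le ht1]
        exact Set.Icc_subset_Icc le_rfl ht₂mem.2
      have hnormint : ‖∫ τ in t₀..t₂, G τ‖ ≤ M * (1/4) := by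
        calc ‖∫ τ in t₀..t₂, G τ‖ ≤ ∫ τ in t₀..t₂, ‖G τ‖ :=
              intervalIntegral.norm_integral_le_integral_norm ht₂l
          _ ≤ ∫ τ in t₀..t₂, M * F τ := by
              apply intervalIntegral.integral_mono_on ht₂l hGi2.norm
                ((hFint t₀ t₂).const_mul M)
              intro x hx
              exact hGbd M t1 hbound x hx.1 (le_trans hx.2 ht₂mem.2)
          _ = M * ∫ τ in t₀..t₂, F τ := intervalIntegral.integral_const_mul _ _
          _ ≤ M * (1/4) := mul_le_mul_of_nonneg_left (htail t₂ ht₂l) (by linarith)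
      have hMle : M ≤ 1 + M * (1/4) := by
        have heq : f t₂ = 1 - ∫ τ in t₀..t₂, G τ := hfeq t₂ ht₂l
        have habs : |f t₂| ≤ 1 + ‖∫ τ in t₀..t₂, G τ‖ := by
          rw [heq, Real.norm_eq_abs]
          rcases abs_cases (1 - ∫ τ in t₀..t₂, G τ) with ⟨h1, _⟩ | ⟨h1, _⟩ <;>
            rcases abs_cases (∫ τ in t₀..t₂, G τ) with ⟨h2, _⟩ | ⟨h2, _⟩ <;> linarith
        exact le_trans habs (by linarith)
      linarith
    -- lower bound for f
    have hflow : ∀ t, t₀ ≤ t → (1:ℝ)/2 ≤ f t := by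
      intro t ht
      rw [hfeq t ht]
      by_cases hGi : IntervalIntegrable G volume t₀ t
      · have hb : ‖∫ τ in t₀..t, G τ‖ ≤ (3/2) * (1/4) := by
          calc ‖∫ τ in t₀..t, G τ‖ ≤ ∫ τ in t₀..t, ‖G τ‖ :=
                intervalIntegral.norm_integral_le_integral_norm ht
            _ ≤ ∫ τ in t₀..t, (3/2) * F τ := by
                apply intervalIntegral.integral_mono_on ht hGi.norm
                  ((hFint t₀ t).const_mul (3/2))
                intro x hx
                exact hGbd (3/2) t (fun u h1 _ => hfbd u h1) x hx.1 hx.2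
            _ = (3/2) * ∫ τ in t₀..t, F τ := intervalIntegral.integral_const_mul _ _
            _ ≤ (3/2) * (1/4) := mul_le_mul_of_nonneg_left (htail t ht) (by norm_num)
        rw [Real.norm_eq_abs] at hb
        linarith [(abs_le.1 hb).1, (abs_le.1 hb).2]
      · rw [intervalIntegral.integral_undef hGi]; norm_num
    have hge := ge_of_tendsto (hstab t₀ ht₀)
      (Filter.eventually_atTop.2 ⟨t₀, hflow⟩)
    linarith
  refine ⟨hni, ?_⟩
  intro t₀ ht₀ x₀
  have hdiv : Tendsto (fun t => ∫ s in t₀..t, F s) atTop atTop := by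
    apply tendsto_atTop_atTop_of_monotone
    · intro p q hpq
      have hsplit : (∫ s in t₀..q, F s) - ∫ s in t₀..p, F s = ∫ s in p..q, F s :=
        intervalIntegral.integral_interval_sub_left (hFint t₀ q) (hFint t₀ p)
      have hpos : 0 ≤ ∫ s in p..q, F s :=
        intervalIntegral.integral_nonneg hpq fun u _ => hFpos u
      linarith
    · by_contra hcon
      push_neg at hcon
      obtain ⟨b, hb⟩ := hcon
      have hfi : ∀ i : ℝ, IntegrableOn F (Set.Ioc t₀ i) := fun i => (hFint t₀ i).1
      have hIoi : IntegrableOn F (Set.Ioi t₀) := by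
        refine integrableOn_Ioi_of_intervalIntegral_norm_bounded
          (μ := volume) (l := atTop) (b := fun i : ℝ => i) b t₀ hfi tendsto_id ?_
        filter_upwards with i
        calc (∫ x in t₀..i, ‖F x‖) = ∫ x in t₀..i, F x := by
              congr 1
              ext x
              exact Real.norm_of_nonneg (hFpos x)
          _ ≤ b := le_of_lt (hb i)
      have : IntegrableOn F (Set.Ici (0:ℝ)) := by
        apply ((hFloc (Set.Icc 0 t₀) measure_Icc_lt_top).union hIoi).mono_set
        intro x hx
        by_cases hxt : x ≤ t₀
        · exact Or.inl ⟨hx, hxt⟩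
        · exact Or.inr (lt_of_not_ge hxt)
      exact hni this
  have hexp : Tendsto (fun t => Real.exp (-∫ s in t₀..t, F s)) atTop (nhds 0) :=
    Real.tendsto_exp_neg_atTop_nhds_zero.comp hdiv
  simpa using hexp.const_mul x₀
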